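/- In Case b2), there exists a unique pair of real numbers (s,t) such that s·(1/p^X_i) + t·(1/p^Y_i) = 1 for every i ∈ I. -/

import Mathlib

open MeasureTheory ProbabilityTheory Filter Finset Topology

noncomputable section

attribute [local instance] Classical.propDecidable

/-- The simplex `Λ` of probability vectors on `{1,…,m}`. -/
def Lam (m : ℕ) : Set (Fin m → ℝ) := {l | (∀ i, 0 ≤ l i) ∧ ∑ i, l i = 1}

/-- `f(λ^X, λ^Y) = Σ_i min (p^X_i λ^X_i) (p^Y_i λ^Y_i)`. -/
def fobj {m : ℕ} (pX pY : Fin m → ℝ) (l : (Fin m → ℝ) × (Fin m → ℝ)) : ℝ :=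
  ∑ i, min (pX i * l.1 i) (pY i * l.2 i)

/-- `e_max`, the maximum of `f` over `Λ²`. -/
def emax {m : ℕ} (pX pY : Fin m → ℝ) : ℝ :=
  sSup (fobj pX pY '' (Lam m ×ˢ Lam m))

/-- The set `U`. -/
def Uset {m : ℕ} (pX pY : Fin m → ℝ) : Set (Fin m → ℝ) :=
  {u | (∀ i, 0 ≤ u i) ∧ (∑ i, u i / pX i) ≤ 1 ∧ (∑ i, u i / pY i) ≤ 1}

/-- The set `L_U` of maximizers of `φ(u) = Σ_i u_i` over `U`. -/
def LU {m : ℕ} (pX pY : Fin m → ℝ) : Set (Fin m → ℝ) :=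
  {u ∈ Uset pX pY | ∑ i, u i = emax pX pY}

/-- The set `I` of letters usable in a maximizer. -/
def Iset {m : ℕ} (pX pY : Fin m → ℝ) : Set (Fin m) :=
  {i | ∃ u ∈ LU pX pY, 0 < u i}

/-- Case a): some maximizer saturates the `X` constraint but not the `Y` one. -/
def CaseA {m : ℕ} (pX pY : Fin m → ℝ) : Prop :=
  ∃ u ∈ LU pX pY, (∑ i, u i / pX i) = 1 ∧ (∑ i, u i / pY i) < 1

/-- Case b): every maximizer saturates both constraints. -/
def CaseB {m : ℕ} (pX pY : Fin m → ℝ) : Prop :=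
  ∀ u ∈ LU pX pY, (∑ i, u i / pX i) = 1 ∧ (∑ i, u i / pY i) = 1

/-- Case b1): Case b) and the vectors `(1/p^X_i)_{i∈I}` and `(1/p^Y_i)_{i∈I}` coincide. -/
def CaseB1 {m : ℕ} (pX pY : Fin m → ℝ) : Prop :=
  CaseB pX pY ∧ ∀ i ∈ Iset pX pY, (pX i)⁻¹ = (pY i)⁻¹

/-- Case b2): Case b) and the vectors `(1/p^X_i)_{i∈I}` and `(1/p^Y_i)_{i∈I}` differ. -/
def CaseB2 {m : ℕ} (pX pY : Fin m → ℝ) : Prop :=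
  CaseB pX pY ∧ ¬ (∀ i ∈ Iset pX pY, (pX i)⁻¹ = (pY i)⁻¹)

/-- The set `K_{Λ²}` of maximizers of `f` over `Λ²`. -/
def Kset {m : ℕ} (pX pY : Fin m → ℝ) : Set ((Fin m → ℝ) × (Fin m → ℝ)) :=
  {l ∈ Lam m ×ˢ Lam m | fobj pX pY l = emax pX pY}

/-- `p^X_max`. -/
def pXmax {m : ℕ} (pX : Fin m → ℝ) : ℝ := ⨆ i, pX i

/-- The set `J` (Case a)). -/
def Jset {m : ℕ} (pX pY : Fin m → ℝ) : Set (Fin m → ℝ) :=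
  {l ∈ Lam m | (∀ i ∉ Iset pX pY, l i = 0) ∧
    (∑ i ∈ Finset.univ.filter (· ∈ Iset pX pY), l i / pY i) ≤ 1 / pXmax pX}

/-- `E = {x : Σ_i x_i = 0}`. -/
def Eset (m : ℕ) : Set (Fin m → ℝ) := {x | ∑ i, x i = 0}

/-- `E' = {x ∈ E : x_i ≥ 0 for i ∉ I}`. -/
def E'set {m : ℕ} (pX pY : Fin m → ℝ) : Set (Fin m → ℝ) :=
  {x ∈ Eset m | ∀ i ∉ Iset pX pY, 0 ≤ x i}

/-- The function `𝔪` of Lemma 1.4. -/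
def mfrak {m : ℕ} (pX pY : Fin m → ℝ) (ν : (Fin m → ℝ) × (Fin m → ℝ)) : ℝ :=
  sSup ((fun x : (Fin m → ℝ) × (Fin m → ℝ) =>
      ∑ i, min (pX i * x.1 i + ν.1 i) (pY i * x.2 i + ν.2 i)) ''
    (E'set pX pY ×ˢ E'set pX pY))

/-- Partial sum `λ_1 + … + λ_i`. -/
def psumLe {m : ℕ} (l : Fin m → ℝ) (i : Fin m) : ℝ :=
  ∑ j ∈ Finset.univ.filter (· ≤ i), l j

/-- Partial sum `λ_1 + … + λ_{i-1}`. -/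
def psumLt {m : ℕ} (l : Fin m → ℝ) (i : Fin m) : ℝ :=
  ∑ j ∈ Finset.univ.filter (· < i), l j

/-- `e(i,j)`. -/
def eij {m : ℕ} (pX pY : Fin m → ℝ) (i j : Fin m) : ℝ :=
  (pX i * pY i * (pX j - pY j) + pX j * pY j * (pY i - pX i)) /
    (pY i * pX j - pX i * pY j)

/-- The set `S` of admissible pairs `(i,j)` in the representation of `e_max`. -/
def Sset {m : ℕ} (pX pY : Fin m → ℝ) : Set (Fin m × Fin m) :=
  {ij | pX ij.1 < pX ij.2 ∧ pY ij.2 < pY ij.1 ∧ pX ij.1 < pY ij.1 ∧ pY ij.2 < pX ij.2}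

/-- `e_1 = max_i min(p^X_i, p^Y_i)`. -/
def e1 {m : ℕ} (pX pY : Fin m → ℝ) : ℝ := ⨆ i, min (pX i) (pY i)

/-- `e_2 = max_{(i,j)∈S} e(i,j)` (with `sSup ∅ = 0` when `S` is empty). -/
def e2 {m : ℕ} (pX pY : Fin m → ℝ) : ℝ :=
  sSup ((fun ij : Fin m × Fin m => eij pX pY ij.1 ij.2) '' Sset pX pY)


section AuxLemmas

variable {m : ℕ} {pX pY : Fin m → ℝ}

lemma lam_coord_le_one {l : Fin m → ℝ} (hl : l ∈ Lam m) (i : Fin m) : l i ≤ 1 := by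
  rcases hl with ⟨h0, hs⟩
  calc l i ≤ ∑ j, l j := Finset.single_le_sum (fun j _ => h0 j) (Finset.mem_univ i)
    _ = 1 := hs

lemma fobj_bdd (hpX : ∀ i, 0 < pX i) (hpXsum : ∑ i, pX i = 1) :
    ∀ y ∈ fobj pX pY '' (Lam m ×ˢ Lam m), y ≤ 1 := by
  rintro y ⟨⟨lX, lY⟩, ⟨hX, hY⟩, rfl⟩
  calc fobj pX pY (lX, lY) ≤ ∑ i, pX i * lX i :=
        Finset.sum_le_sum fun i _ => min_le_left _ _
    _ ≤ ∑ i, pX i := Finset.sum_le_sum fun i _ =>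
        mul_le_of_le_one_right (hpX i).le (lam_coord_le_one hX i)
    _ = 1 := hpXsum

lemma sum_le_emax (hm : 0 < m) (hpX : ∀ i, 0 < pX i) (hpY : ∀ i, 0 < pY i)
    (hpXsum : ∑ i, pX i = 1) :
    ∀ u ∈ Uset pX pY, ∑ i, u i ≤ emax pX pY := by
  rintro u ⟨hu0, huX, huY⟩
  set i₀ : Fin m := ⟨0, hm⟩ with hi₀
  set lX : Fin m → ℝ :=
    fun i => u i / pX i + (if i = i₀ then 1 - ∑ j, u j / pX j else 0) with hlXdef
  set lY : Fin m → ℝ :=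
    fun i => u i / pY i + (if i = i₀ then 1 - ∑ j, u j / pY j else 0) with hlYdef
  have hlX : lX ∈ Lam m := by
    constructor
    · intro i
      have h1 : 0 ≤ u i / pX i := div_nonneg (hu0 i) (hpX i).le
      have h2 : (0:ℝ) ≤ if i = i₀ then 1 - ∑ j, u j / pX j else 0 := by
        split
        · linarith
        · exact le_refl 0
      simp only [hlXdef]
      linarith
    · simp only [hlXdef, Finset.sum_add_distrib, Finset.sum_ite_eq' Finset.univ i₀,
        Finset.mem_univ, if_true]
      ring
  have hlY : lY ∈ Lam m := by
    constructor
    · intro i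
      have h1 : 0 ≤ u i / pY i := div_nonneg (hu0 i) (hpY i).le
      have h2 : (0:ℝ) ≤ if i = i₀ then 1 - ∑ j, u j / pY j else 0 := by
        split
        · linarith
        · exact le_refl 0
      simp only [hlYdef]
      linarith
    · simp only [hlYdef, Finset.sum_add_distrib, Finset.sum_ite_eq' Finset.univ i₀,
        Finset.mem_univ, if_true]
      ring
  have key : ∑ i, u i ≤ fobj pX pY (lX, lY) := by
    apply Finset.sum_le_sum
    intro i _
    have hci : pX i * (u i / pX i) = u i := by
      rw [mul_comm]; exact div_mul_cancel₀ (u i) (hpX i).ne'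
    have hdi : pY i * (u i / pY i) = u i := by
      rw [mul_comm]; exact div_mul_cancel₀ (u i) (hpY i).ne'
    have h2 : (0:ℝ) ≤ if i = i₀ then 1 - ∑ j, u j / pX j else 0 := by
      split
      · linarith
      · exact le_refl 0
    have h2' : (0:ℝ) ≤ if i = i₀ then 1 - ∑ j, u j / pY j else 0 := by
      split
      · linarith
      · exact le_refl 0
    have h1 : u i ≤ pX i * lX i := by
      simp only [hlXdef, mul_add, hci]
      nlinarith [(hpX i).le]
    have h1' : u i ≤ pY i * lY i := by
      simp only [hlYdef, mul_add, hdi]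
      nlinarith [(hpY i).le]
    exact le_min h1 h1'
  refine key.trans (le_csSup ?_ ⟨(lX, lY), ⟨hlX, hlY⟩, rfl⟩)
  exact ⟨1, fun y hy => fobj_bdd hpX hpXsum y hy⟩

end AuxLemmas

set_option maxHeartbeats 1000000 in
/-- **Lemma 1.3**: in Case b2) there is a unique pair of reals `(s, t)` with
`s/p^X_i + t/p^Y_i = 1` for every `i ∈ I`. -/
theorem caseB2_unique_st
    (m : ℕ) (hm : 2 ≤ m)
    (pX pY : Fin m → ℝ)
    (hpX : ∀ i, 0 < pX i) (hpY : ∀ i, 0 < pY i)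
    (hpXsum : ∑ i, pX i = 1) (hpYsum : ∑ i, pY i = 1)
    (hCaseB2 : CaseB2 pX pY) :
    ∃! st : ℝ × ℝ, ∀ i ∈ Iset pX pY, st.1 * (pX i)⁻¹ + st.2 * (pY i)⁻¹ = 1 := by
  classical
  obtain ⟨hB, hne⟩ := hCaseB2
  push_neg at hne
  obtain ⟨i0, hi0I, hi0ne⟩ := hne
  set a : Fin m → ℝ := fun i => (pX i)⁻¹ with ha
  set b : Fin m → ℝ := fun i => (pY i)⁻¹ with hb
  have hdivX : ∀ u : Fin m → ℝ, ∑ i, u i / pX i = ∑ i, u i * a i :=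
    fun u => Finset.sum_congr rfl fun i _ => div_eq_mul_inv _ _
  have hdivY : ∀ u : Fin m → ℝ, ∑ i, u i / pY i = ∑ i, u i * b i :=
    fun u => Finset.sum_congr rfl fun i _ => div_eq_mul_inv _ _
  -- choose witnesses
  have hch : ∀ i : Fin m, i ∈ Iset pX pY → ∃ u, u ∈ LU pX pY ∧ 0 < u i := fun i hi => hi
  choose! w hwLU hwpos using hch
  -- support of elements of LU is inside Iset
  have hsupp : ∀ u ∈ LU pX pY, ∀ j, j ∉ Iset pX pY → u j = 0 := by
    intro u hu j hj
    by_contra h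
    exact hj ⟨u, hu, lt_of_le_of_ne (hu.1.1 j) (Ne.symm h)⟩
  set IF : Finset (Fin m) := Finset.univ.filter (· ∈ Iset pX pY) with hIF
  have hIFmem : ∀ i, i ∈ IF ↔ i ∈ Iset pX pY := by
    intro i; simp [hIF]
  have hIFne : IF.Nonempty := ⟨i0, (hIFmem i0).2 hi0I⟩
  set n : ℝ := (IF.card : ℝ) with hn
  have hnpos : 0 < n := by
    have := Finset.card_pos.mpr hIFne
    positivity
  set ubar : Fin m → ℝ := fun j => (∑ i ∈ IF, w i j) / n with hubar
  have hub0 : ∀ j, 0 ≤ ubar j := by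
    intro j
    apply div_nonneg _ hnpos.le
    exact Finset.sum_nonneg fun i hi => (hwLU i ((hIFmem i).1 hi)).1.1 j
  have keysum : ∀ p : Fin m → ℝ, ∀ c : ℝ, (∀ i ∈ IF, ∑ j, w i j / p j = c) →
      ∑ j, ubar j / p j = c := by
    intro p c hp
    calc ∑ j, ubar j / p j
        = ∑ j, (∑ i ∈ IF, w i j / p j) / n := by
          refine Finset.sum_congr rfl fun j _ => ?_
          rw [hubar]
          rw [div_right_comm, Finset.sum_div]
      _ = (∑ j, ∑ i ∈ IF, w i j / p j) / n := by rw [Finset.sum_div]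
      _ = (∑ i ∈ IF, ∑ j, w i j / p j) / n := by rw [Finset.sum_comm]
      _ = (∑ i ∈ IF, c) / n := by rw [Finset.sum_congr rfl hp]
      _ = c := by
          rw [Finset.sum_const, nsmul_eq_mul, ← hn]
          field_simp
  have subX : ∑ j, ubar j / pX j = 1 :=
    keysum pX 1 fun i hi => (hB _ (hwLU i ((hIFmem i).1 hi))).1
  have subY : ∑ j, ubar j / pY j = 1 :=
    keysum pY 1 fun i hi => (hB _ (hwLU i ((hIFmem i).1 hi))).2
  have hUsum : ∑ j, ubar j = emax pX pY := by
    have := keysum (fun _ => 1) (emax pX pY) (fun i hi => by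
      simpa using (hwLU i ((hIFmem i).1 hi)).2)
    simpa using this
  have hUa : ∑ j, ubar j * a j = 1 := by rw [← hdivX]; exact subX
  have hUb : ∑ j, ubar j * b j = 1 := by rw [← hdivY]; exact subY
  have hubpos : ∀ i ∈ Iset pX pY, 0 < ubar i := by
    intro i hi
    apply div_pos _ hnpos
    refine Finset.sum_pos' (fun i' hi' => (hwLU i' ((hIFmem i').1 hi')).1.1 i) ?_
    exact ⟨i, (hIFmem i).2 hi, hwpos i hi⟩
  have hubzero : ∀ j, j ∉ Iset pX pY → ubar j = 0 := by
    intro j hj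
    simp only [hubar]
    have : ∀ i ∈ IF, w i j = 0 := fun i hi =>
      hsupp (w i) (hwLU i ((hIFmem i).1 hi)) j hj
    rw [Finset.sum_eq_zero this, zero_div]
  -- the key perturbation lemma
  have pert : ∀ d : Fin m → ℝ, (∀ j, j ∉ Iset pX pY → d j = 0) →
      (∑ j, d j * a j) = 0 → (∑ j, d j * b j) = 0 → (∑ j, d j) = 0 := by
    intro d hdsupp hda hdb
    by_contra hc
    set δ : ℝ := IF.inf' hIFne (fun i => ubar i / (|d i| + 1)) with hδ
    have hδpos : 0 < δ := by
      rw [hδ, Finset.lt_inf'_iff]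
      intro i hi
      exact div_pos (hubpos i ((hIFmem i).1 hi)) (by positivity)
    have hδle : ∀ i ∈ Iset pX pY, δ * |d i| ≤ ubar i := by
      intro i hi
      have h1 : δ ≤ ubar i / (|d i| + 1) := Finset.inf'_le _ ((hIFmem i).2 hi)
      have h2 : (0:ℝ) < |d i| + 1 := by positivity
      have h3 : δ * (|d i| + 1) ≤ ubar i := (le_div_iff₀ h2).mp h1
      nlinarith
    set ε : ℝ := if 0 < ∑ j, d j then δ else -δ with hε
    have hεabs : |ε| = δ := by
      rw [hε]
      split
      · exact abs_of_pos hδpos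
      · rw [abs_neg]; exact abs_of_pos hδpos
    have hεc : 0 < ε * ∑ j, d j := by
      rw [hε]
      split
      · next h => exact mul_pos hδpos h
      · next h =>
          have hlt : ∑ j, d j < 0 := lt_of_le_of_ne (not_lt.mp h) hc
          exact mul_pos_of_neg_of_neg (by linarith) hlt
    set u' : Fin m → ℝ := fun j => ubar j + ε * d j with hu'
    have hu'U : u' ∈ Uset pX pY := by
      refine ⟨?_, ?_, ?_⟩
      · intro j
        by_cases hj : j ∈ Iset pX pY
        · have h1 := hδle j hj
          have h2 : |ε * d j| ≤ ubar j := by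
            rw [abs_mul, hεabs]; exact h1
          have h3 := neg_abs_le (ε * d j)
          simp only [hu']
          linarith
        · simp only [hu', hdsupp j hj, mul_zero, add_zero]
          exact hub0 j
      · have heq : ∑ j, u' j / pX j = ∑ j, (ubar j * a j + ε * (d j * a j)) := by
          refine Finset.sum_congr rfl fun j _ => ?_
          simp only [hu', ha]
          rw [div_eq_mul_inv]; ring
        rw [heq, Finset.sum_add_distrib, ← Finset.mul_sum, hUa, hda]
        norm_num
      · have heq : ∑ j, u' j / pY j = ∑ j, (ubar j * b j + ε * (d j * b j)) := by
          refine Finset.sum_congr rfl fun j _ => ?_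
          simp only [hu', hb]
          rw [div_eq_mul_inv]; ring
        rw [heq, Finset.sum_add_distrib, ← Finset.mul_sum, hUb, hdb]
        norm_num
    have hcontra := sum_le_emax (by omega) hpX hpY hpXsum u' hu'U
    have hsum' : ∑ j, u' j = emax pX pY + ε * ∑ j, d j := by
      simp only [hu', Finset.sum_add_distrib, ← Finset.mul_sum, hUsum]
    linarith
  -- the span argument
  set A : EuclideanSpace ℝ (Fin m) := WithLp.toLp 2 (fun j => if j ∈ Iset pX pY then a j else 0) with hA
  set B : EuclideanSpace ℝ (Fin m) := WithLp.toLp 2 (fun j => if j ∈ Iset pX pY then b j else 0) with hB'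
  set O : EuclideanSpace ℝ (Fin m) := WithLp.toLp 2 (fun j => if j ∈ Iset pX pY then 1 else 0) with hO
  have hspan : O ∈ Submodule.span ℝ ({A, B} : Set (EuclideanSpace ℝ (Fin m))) := by
    rw [← Submodule.orthogonal_orthogonal (Submodule.span ℝ {A, B})]
    rw [Submodule.mem_orthogonal]
    intro d hd
    have hdA : @inner ℝ _ _ A d = 0 :=
      Submodule.inner_right_of_mem_orthogonal
        (Submodule.subset_span (Set.mem_insert _ _)) hd
    have hmemB : B ∈ ({A, B} : Set (EuclideanSpace ℝ (Fin m))) :=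
      Set.mem_insert_iff.mpr (Or.inr rfl)
    have hdB : @inner ℝ _ _ B d = 0 :=
      Submodule.inner_right_of_mem_orthogonal (Submodule.subset_span hmemB) hd
    set dt : Fin m → ℝ := fun j => if j ∈ Iset pX pY then d j else 0 with hdt
    have hdta : ∑ j, dt j * a j = 0 := by
      rw [← hdA, PiLp.inner_apply]
      refine Finset.sum_congr rfl fun j _ => ?_
      simp only [hdt, hA, PiLp.toLp_apply, RCLike.inner_apply, conj_trivial]
      split <;> ring
    have hdtb : ∑ j, dt j * b j = 0 := by
      rw [← hdB, PiLp.inner_apply]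
      refine Finset.sum_congr rfl fun j _ => ?_
      simp only [hdt, hB', PiLp.toLp_apply, RCLike.inner_apply, conj_trivial]
      split <;> ring
    have hdtsupp : ∀ j, j ∉ Iset pX pY → dt j = 0 := by
      intro j hj; simp only [hdt, if_neg hj]
    have := pert dt hdtsupp hdta hdtb
    rw [PiLp.inner_apply]
    rw [← this]
    refine Finset.sum_congr rfl fun j _ => ?_
    simp only [hdt, hO, PiLp.toLp_apply, RCLike.inner_apply, conj_trivial]
    split <;> ring
  obtain ⟨s, t, hst⟩ := Submodule.mem_span_pair.mp hspan
  have hP : ∀ i ∈ Iset pX pY, s * (pX i)⁻¹ + t * (pY i)⁻¹ = 1 := by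
    intro i hi
    have heval : s * A i + t * B i = O i := by
      have : (s • A + t • B) i = O i := by rw [hst]
      simpa [PiLp.smul_apply, PiLp.add_apply, smul_eq_mul] using this
    simp only [hA, hB', hO, PiLp.toLp_apply, if_pos hi] at heval
    exact heval
  -- find a second index giving an invertible 2×2 system
  have hdet : ∃ j ∈ Iset pX pY, a i0 * b j ≠ a j * b i0 := by
    by_contra h
    push_neg at h
    have hzero : ∑ j, ubar j * (a i0 * b j - b i0 * a j) = 0 := by
      apply Finset.sum_eq_zero
      intro j _
      by_cases hj : j ∈ Iset pX pY
      · rw [h j hj]; ring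
      · rw [hubzero j hj, zero_mul]
    have hexp : ∑ j, ubar j * (a i0 * b j - b i0 * a j)
        = a i0 * (∑ j, ubar j * b j) - b i0 * (∑ j, ubar j * a j) := by
      rw [Finset.mul_sum, Finset.mul_sum, ← Finset.sum_sub_distrib]
      exact Finset.sum_congr rfl fun j _ => by ring
    rw [hexp, hUa, hUb] at hzero
    exact hi0ne (by linarith)
  obtain ⟨j0, hj0I, hDne⟩ := hdet
  refine ⟨(s, t), hP, ?_⟩
  rintro ⟨s', t'⟩ h'
  have e1 : s * a i0 + t * b i0 = 1 := hP i0 hi0I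
  have e2 : s * a j0 + t * b j0 = 1 := hP j0 hj0I
  have e1' : s' * a i0 + t' * b i0 = 1 := h' i0 hi0I
  have e2' : s' * a j0 + t' * b j0 = 1 := h' j0 hj0I
  have hDne' : a i0 * b j0 - a j0 * b i0 ≠ 0 := sub_ne_zero_of_ne hDne
  have key1 : (s' - s) * (a i0 * b j0 - a j0 * b i0) = 0 := by
    linear_combination b j0 * e1' - b j0 * e1 - b i0 * e2' + b i0 * e2
  have key2 : (t' - t) * (a i0 * b j0 - a j0 * b i0) = 0 := by
    linear_combination a i0 * e2' - a i0 * e2 - a j0 * e1' + a j0 * e1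
  have hs : s' = s := sub_eq_zero.mp ((mul_eq_zero.mp key1).resolve_right hDne')
  have ht : t' = t := sub_eq_zero.mp ((mul_eq_zero.mp key2).resolve_right hDne')
  exact Prod.ext hs ht

end
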